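/- Let F be a field, (V_n)_{n∈ℤ} vector spaces over F, and f_n : V_n → V_{n−1} linear maps. Suppose there is an integer N such that f_n is surjective for all n > N and injective for all n < N. Let 𝔸 be the inverse limit (coherent sequences) and 𝕂 ⊆ 𝔸 the subspace of sequences vanishing for all sufficiently small indices. Then the quotient 𝔸/𝕂 is isomorphic as an F-vector space to the image of the composite f_N ∘ f_{N+1} : V_{N+1} → V_{N−1}. -/
import Mathlib


/-- The canonical linear map `V a →ₗ[F] V b` induced by an equality `a = b`. -/
def castLinearMap (F : Type*) [Field F] {ι : Type*} (V : ι → Type*)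
    [∀ i, AddCommGroup (V i)] [∀ i, Module F (V i)] {a b : ι} (h : a = b) :
    V a →ₗ[F] V b := by subst h; exact LinearMap.id

section Aux

variable {F : Type*} [Field F] {V : ℤ → Type*}
  [∀ n, AddCommGroup (V n)] [∀ n, Module F (V n)]

theorem castLM_heq {a b : ℤ} (h : a = b) (v : V a) :
    HEq (castLinearMap F V h v) v := by subst h; rfl

theorem castLM_apply_fun (x : ∀ n, V n) {a b : ℤ} (h : a = b) :
    castLinearMap F V h (x a) = x b := by subst h; rfl

theorem castLM_surjective {a b : ℤ} (h : a = b) :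
    Function.Surjective (castLinearMap F V h) := by
  subst h; exact fun v => ⟨v, rfl⟩

theorem castLM_eq_of_heq {a b c : ℤ} (h1 : a = c) (h2 : b = c)
    {v : V a} {w : V b} (hv : HEq v w) :
    castLinearMap F V h1 v = castLinearMap F V h2 w := by
  subst h1; subst h2; rw [eq_of_heq hv]

theorem castLM_rfl {a : ℤ} (h : a = a) (v : V a) :
    castLinearMap F V h v = v := eq_of_heq (castLM_heq h v)

theorem castLM_cast_cancel {a b : ℤ} (h1 : a = b) (h2 : b = a) (v : V a) :
    castLinearMap F V h2 (castLinearMap F V h1 v) = v :=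
  eq_of_heq ((castLM_heq h2 _).trans (castLM_heq h1 v))

theorem fun_heq (x : ∀ n, V n) {a b : ℤ} (h : a = b) : HEq (x a) (x b) := by rw [h]

variable (f : (n : ℤ) → V n →ₗ[F] V (n - 1))

theorem f_heq {a b : ℤ} (h : a = b) {v : V a} {w : V b} (hv : HEq v w) :
    HEq (f a v) (f b w) := by subst h; rw [eq_of_heq hv]

/-- The transition map `V (n+1) →ₗ[F] V n`. -/
def gmap (n : ℤ) : V (n + 1) →ₗ[F] V n :=
  (castLinearMap F V (show n + 1 - 1 = n by ring)).comp (f (n + 1))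

theorem gmap_heq {a b : ℤ} (h : a = b) {v : V (a + 1)} {w : V (b + 1)} (hv : HEq v w) :
    HEq (gmap f a v) (gmap f b w) := by subst h; rw [eq_of_heq hv]

theorem gmap_surjective (N : ℤ) (hsurj : ∀ n > N, Function.Surjective (f n))
    {n : ℤ} (hn : N ≤ n) : Function.Surjective (gmap f n) := by
  rw [gmap, LinearMap.coe_comp]
  exact (castLM_surjective _).comp (hsurj (n + 1) (by omega))

variable (N : ℤ)

noncomputable def upSeq (hs : ∀ n, N ≤ n → Function.Surjective (gmap f n))
    (w : V (N + 1)) : (k : ℕ) → V (N + 1 + (k : ℤ))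
  | 0 => castLinearMap F V (by omega) w
  | (k + 1) => castLinearMap F V (show N + 1 + (k : ℤ) + 1 = N + 1 + ((k + 1 : ℕ) : ℤ) by omega)
      ((hs (N + 1 + (k : ℤ)) (by omega) (upSeq hs w k)).choose)

theorem upSeq_zero (hs : ∀ n, N ≤ n → Function.Surjective (gmap f n)) (w : V (N + 1)) :
    upSeq f N hs w 0 = castLinearMap F V (by omega) w := by rw [upSeq]

theorem upSeq_spec (hs : ∀ n, N ≤ n → Function.Surjective (gmap f n)) (w : V (N + 1)) (k : ℕ) :
    gmap f (N + 1 + (k : ℤ))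
      (castLinearMap F V (show N + 1 + ((k + 1 : ℕ) : ℤ) = N + 1 + (k : ℤ) + 1 by omega)
        (upSeq f N hs w (k + 1))) = upSeq f N hs w k := by
  conv_lhs => rw [upSeq]
  rw [castLM_cast_cancel]
  exact (hs (N + 1 + (k : ℤ)) (by omega) (upSeq f N hs w k)).choose_spec

noncomputable def downSeq (w : V (N + 1)) : (k : ℕ) → V (N + 1 - (k : ℤ))
  | 0 => castLinearMap F V (by omega) w
  | (k + 1) => castLinearMap F V (show N - (k : ℤ) = N + 1 - ((k + 1 : ℕ) : ℤ) by omega)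
      (gmap f (N - (k : ℤ))
        (castLinearMap F V (show N + 1 - (k : ℤ) = N - (k : ℤ) + 1 by omega) (downSeq w k)))

theorem downSeq_zero (w : V (N + 1)) :
    downSeq f N w 0 = castLinearMap F V (by omega) w := by rw [downSeq]

theorem downSeq_succ (w : V (N + 1)) (k : ℕ) :
    downSeq f N w (k + 1) = castLinearMap F V (show N - (k : ℤ) = N + 1 - ((k + 1 : ℕ) : ℤ) by omega)
      (gmap f (N - (k : ℤ))
        (castLinearMap F V (show N + 1 - (k : ℤ) = N - (k : ℤ) + 1 by omega) (downSeq f N w k))) := by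
  rw [downSeq]

noncomputable def fullSeq (hs : ∀ n, N ≤ n → Function.Surjective (gmap f n))
    (w : V (N + 1)) (n : ℤ) : V n :=
  if h : N + 1 ≤ n then
    castLinearMap F V (show N + 1 + (((n - (N + 1)).toNat : ℕ) : ℤ) = n by omega)
      (upSeq f N hs w (n - (N + 1)).toNat)
  else
    castLinearMap F V (show N + 1 - (((N + 1 - n).toNat : ℕ) : ℤ) = n by omega)
      (downSeq f N w (N + 1 - n).toNat)

theorem fullSeq_up (hs : ∀ n, N ≤ n → Function.Surjective (gmap f n)) (w : V (N + 1))
    {n : ℤ} (k : ℕ) (hk : N + 1 + (k : ℤ) = n) :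
    fullSeq f N hs w n = castLinearMap F V hk (upSeq f N hs w k) := by
  have hkn : (n - (N + 1)).toNat = k := by omega
  rw [fullSeq, dif_pos (show N + 1 ≤ n by omega)]
  exact castLM_eq_of_heq _ _ (by rw [hkn])

theorem fullSeq_down (w : V (N + 1)) (hs : ∀ n, N ≤ n → Function.Surjective (gmap f n))
    {n : ℤ} (k : ℕ) (hk : N + 1 - (k : ℤ) = n) (hn : n ≤ N) :
    fullSeq f N hs w n = castLinearMap F V hk (downSeq f N w k) := by
  have hkn : (N + 1 - n).toNat = k := by omega
  rw [fullSeq, dif_neg (show ¬ (N + 1 ≤ n) by omega)]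
  exact castLM_eq_of_heq _ _ (by rw [hkn])

theorem fullSeq_apex (hs : ∀ n, N ≤ n → Function.Surjective (gmap f n)) (w : V (N + 1)) :
    fullSeq f N hs w (N + 1) = w := by
  rw [fullSeq_up f N hs w 0 (by omega), upSeq_zero]
  exact eq_of_heq ((castLM_heq _ _).trans (castLM_heq _ _))

theorem fullSeq_coherent (hs : ∀ n, N ≤ n → Function.Surjective (gmap f n)) (w : V (N + 1))
    (n : ℤ) : fullSeq f N hs w n = gmap f n (fullSeq f N hs w (n + 1)) := by
  rcases le_or_gt (N + 1) n with hn | hn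
  · obtain ⟨k, rfl⟩ : ∃ k : ℕ, n = N + 1 + (k : ℤ) := ⟨(n - (N + 1)).toNat, by omega⟩
    rw [fullSeq_up f N hs w k rfl, fullSeq_up f N hs w (k + 1) (by omega),
      upSeq_spec f N hs w k]
    exact castLM_rfl _ _
  · rcases eq_or_lt_of_le (show n ≤ N by omega) with heq | hn'
    · obtain rfl : N = n := heq.symm
      rw [fullSeq_down f N w hs (0 + 1) (by omega) le_rfl,
        fullSeq_up f N hs w 0 (by omega), downSeq_succ, downSeq_zero, upSeq_zero]
      apply eq_of_heq
      refine HEq.trans (b := gmap f N w) ?_ ?_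
      · refine ((castLM_heq _ _).trans (castLM_heq _ _)).trans ?_
        exact gmap_heq f (show N - ((0 : ℕ) : ℤ) = N by omega)
          ((castLM_heq _ _).trans (castLM_heq _ _))
      · exact gmap_heq f rfl (((castLM_heq _ _).trans (castLM_heq _ _)).symm)
    · obtain ⟨j, rfl⟩ : ∃ j : ℕ, n = N - 1 - (j : ℤ) := ⟨(N - 1 - n).toNat, by omega⟩
      rw [fullSeq_down f N w hs (j + 1 + 1) (by omega) (by omega),
        fullSeq_down f N w hs (j + 1) (by omega) (by omega),
        downSeq_succ f N w (j + 1)]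
      apply eq_of_heq
      refine ((castLM_heq _ _).trans (castLM_heq _ _)).trans ?_
      refine gmap_heq f (by omega) ?_
      exact (castLM_heq _ _).trans ((castLM_heq _ _).symm)

end Aux

/-- If `f n` is surjective for `n > N` and injective for `n < N`, then the
inverse limit modulo eventually-zero sequences is isomorphic to the image of
the composite `f N ∘ f (N + 1) : V (N + 1) → V (N - 1)`. -/
theorem stmt5 (F : Type*) [Field F] (V : ℤ → Type*)
    [∀ n, AddCommGroup (V n)] [∀ n, Module F (V n)]
    (f : (n : ℤ) → V n →ₗ[F] V (n - 1)) (N : ℤ)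
    (hsurj : ∀ n > N, Function.Surjective (f n))
    (hinj : ∀ n < N, Function.Injective (f n))
    (A : Submodule F (∀ n, V n))
    (hA : ∀ x, x ∈ A ↔ ∀ n, x (n - 1) = f n (x n))
    (K : Submodule F A)
    (hK : ∀ x : A, x ∈ K ↔ ∃ M : ℤ, ∀ n ≤ M, (x : ∀ n, V n) n = 0) :
    Nonempty ((A ⧸ K) ≃ₗ[F]
      LinearMap.range ((f N).comp
        ((castLinearMap F V (show N + 1 - 1 = N by ring)).comp (f (N + 1))))) := by
  classical
  have hs : ∀ n, N ≤ n → Function.Surjective (gmap f n) := fun n hn =>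
    gmap_surjective f N hsurj hn
  -- coherence reformulation
  have hAiff : ∀ x : ∀ n, V n, (x ∈ A ↔ ∀ n : ℤ, x n = gmap f n (x (n + 1))) := by
    intro x
    rw [hA]
    constructor
    · intro h n
      have h1 := h (n + 1)
      have h2 := castLM_apply_fun (F := F) x (show n + 1 - 1 = n by ring)
      rw [← h2, h1]; rfl
    · intro h n
      have h1 := h (n - 1)
      rw [h1]
      apply eq_of_heq
      simp only [gmap, LinearMap.coe_comp, Function.comp_apply]
      refine (castLM_heq _ _).trans (f_heq f (by ring) ?_)
      exact fun_heq x (by ring)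
  set φ : A →ₗ[F] V (N - 1) := (LinearMap.proj (N - 1)).comp A.subtype with hφdef
  have hφ : ∀ x : A, φ x = (x : ∀ n, V n) (N - 1) := fun x => rfl
  have hker : LinearMap.ker φ = K := by
    ext x
    rw [LinearMap.mem_ker, hφ x, hK x]
    constructor
    · intro h0
      refine ⟨N - 1, ?_⟩
      have key : ∀ k : ℕ, ∀ m : ℤ, m = N - 1 - (k : ℤ) → (x : ∀ n, V n) m = 0 := by
        intro k
        induction k with
        | zero =>
          intro m hm
          have : m = N - 1 := by omega
          subst this; exact h0
        | succ k ih =>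
          intro m hm
          have h1 : (x : ∀ n, V n) (m + 1) = 0 := ih (m + 1) (by omega)
          have h2 := (hA (x : ∀ n, V n)).mp x.2 (m + 1)
          have h3 : (x : ∀ n, V n) (m + 1 - 1) = 0 := by rw [h2, h1, map_zero]
          have h4 := castLM_apply_fun (F := F) (x : ∀ n, V n) (show m + 1 - 1 = m by ring)
          rw [← h4, h3, map_zero]
      exact fun n hn => key (N - 1 - n).toNat n (by omega)
    · rintro ⟨M, hM⟩
      have key : ∀ k : ℕ, ∀ m : ℤ, m ≤ M + (k : ℤ) → m ≤ N - 1 → (x : ∀ n, V n) m = 0 := by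
        intro k
        induction k with
        | zero => intro m hm _; exact hM m (by omega)
        | succ k ih =>
          intro m hm hmN
          by_cases hc : m ≤ M + (k : ℤ)
          · exact ih m hc hmN
          · have h2 := (hA (x : ∀ n, V n)).mp x.2 m
            have h3 : (x : ∀ n, V n) (m - 1) = 0 := ih (m - 1) (by omega) (by omega)
            have h4 : f m ((x : ∀ n, V n) m) = 0 := by rw [← h2]; exact h3
            exact hinj m (by omega) (show f m _ = f m 0 by rw [h4, map_zero])
      exact key (N - 1 - M).toNat (N - 1) (by omega) le_rfl
  have hrange : LinearMap.range φ = LinearMap.range ((f N).comp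
      ((castLinearMap F V (show N + 1 - 1 = N by ring)).comp (f (N + 1)))) := by
    apply le_antisymm
    · rintro v ⟨x, rfl⟩
      refine LinearMap.mem_range.mpr ⟨(x : ∀ n, V n) (N + 1), ?_⟩
      have h1 := (hA (x : ∀ n, V n)).mp x.2 N
      have h2 := (hAiff (x : ∀ n, V n)).mp x.2 N
      rw [hφ x, h1, h2]; rfl
    · rintro v ⟨w, rfl⟩
      have hmem : fullSeq f N hs w ∈ A :=
        (hAiff (fullSeq f N hs w)).mpr (fun n => fullSeq_coherent f N hs w n)
      refine LinearMap.mem_range.mpr ⟨⟨fullSeq f N hs w, hmem⟩, ?_⟩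
      have h1 := (hA (fullSeq f N hs w)).mp hmem N
      have h2 := fullSeq_coherent f N hs w N
      have h3 := fullSeq_apex f N hs w
      show fullSeq f N hs w (N - 1) = _
      rw [h1, h2, h3]; rfl
  exact ⟨(Submodule.quotEquivOfEq K (LinearMap.ker φ) hker.symm).trans
    ((LinearMap.quotKerEquivRange φ).trans (LinearEquiv.ofEq _ _ hrange))⟩
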